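/- Let m be a positive integer, S ≥ 0, and let x₁, …, x_m ≥ 0 satisfy Σ_{j=1}^m x_j ≤ S. Then Σ_{j=1}^m H_b(Q(√(x_j))) ≥ m·H_b(Q(√(S/m))). -/

import Mathlib

open MeasureTheory

/-- The standard normal tail function `Q(t) = ∫ₜ^∞ (1/√(2π)) e^{-u²/2} du`. -/
noncomputable def Qfun (t : ℝ) : ℝ :=
  ∫ u in Set.Ioi t, (Real.sqrt (2 * Real.pi))⁻¹ * Real.exp (-(u ^ 2) / 2)

/-- The binary entropy function `H_b(p) = -p log₂ p - (1-p) log₂ (1-p)`. -/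
noncomputable def binEnt (p : ℝ) : ℝ :=
  -(p * Real.logb 2 p) - (1 - p) * Real.logb 2 (1 - p)

open Real Set Filter Topology intervalIntegral

/-- The standard normal density. -/
noncomputable def gpdf (t : ℝ) : ℝ := (Real.sqrt (2 * Real.pi))⁻¹ * Real.exp (-(t ^ 2) / 2)

lemma sqrt2pi_pos : 0 < Real.sqrt (2 * Real.pi) :=
  Real.sqrt_pos.2 (by positivity)

lemma gpdf_pos (t : ℝ) : 0 < gpdf t := by
  unfold gpdf; positivity

lemma gpdf_cont : Continuous gpdf := by
  unfold gpdf; fun_prop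

lemma gpdf_le (t : ℝ) : gpdf t ≤ (Real.sqrt (2 * Real.pi))⁻¹ := by
  unfold gpdf
  have h1 : Real.exp (-(t ^ 2) / 2) ≤ 1 := Real.exp_le_one_iff.2 (by nlinarith [sq_nonneg t])
  have h2 : (0:ℝ) < (Real.sqrt (2 * Real.pi))⁻¹ := by positivity
  nlinarith

lemma gpdf_even (t : ℝ) : gpdf (-t) = gpdf t := by simp [gpdf]

lemma integrable_gpdf : Integrable gpdf := by
  have h := integrable_exp_neg_mul_sq (by norm_num : (0:ℝ) < 1/2)
  have h2 : Integrable fun x : ℝ => Real.exp (-(x ^ 2) / 2) := by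
    refine h.congr ?_
    filter_upwards with x
    ring_nf
  exact h2.const_mul _

lemma integral_gpdf : ∫ t, gpdf t = 1 := by
  unfold gpdf
  rw [MeasureTheory.integral_const_mul]
  have h := integral_gaussian (1/2)
  have h2 : (∫ x : ℝ, Real.exp (-(x ^ 2) / 2)) = Real.sqrt (2 * Real.pi) := by
    rw [show (2 * Real.pi) = Real.pi / (1/2) by ring, ← h]
    congr 1 with x
    ring_nf
  rw [h2, inv_mul_cancel₀ (ne_of_gt sqrt2pi_pos)]

lemma Qfun_def (t : ℝ) : Qfun t = ∫ u in Set.Ioi t, gpdf u := rfl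

lemma Qfun_nonneg (t : ℝ) : 0 ≤ Qfun t := by
  rw [Qfun_def]
  exact setIntegral_nonneg measurableSet_Ioi fun u _ => (gpdf_pos u).le

lemma Qfun_split {a b : ℝ} (hab : a ≤ b) :
    Qfun a = (∫ u in Set.Ioc a b, gpdf u) + Qfun b := by
  rw [Qfun_def, Qfun_def, ← Set.Ioc_union_Ioi_eq_Ioi hab]
  rw [setIntegral_union Set.Ioc_disjoint_Ioi_same measurableSet_Ioi
    integrable_gpdf.integrableOn integrable_gpdf.integrableOn]

lemma Qfun_eq (a b : ℝ) : Qfun b = Qfun a - ∫ u in a..b, gpdf u := by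
  rcases le_total a b with h | h
  · rw [intervalIntegral.integral_of_le h]
    have := Qfun_split h
    linarith
  · rw [intervalIntegral.integral_of_ge h]
    have := Qfun_split h
    linarith

lemma hasDerivAt_Qfun (t : ℝ) : HasDerivAt Qfun (-gpdf t) t := by
  have h : HasDerivAt (fun s => ∫ u in (0:ℝ)..s, gpdf u) (gpdf t) t := by
    refine intervalIntegral.integral_hasDerivAt_right
      integrable_gpdf.intervalIntegrable
      (gpdf_cont.stronglyMeasurableAtFilter _ _) gpdf_cont.continuousAt
  have h2 : HasDerivAt (fun s => Qfun 0 - ∫ u in (0:ℝ)..s, gpdf u) (-gpdf t) t := by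
    exact ((hasDerivAt_const t (Qfun 0)).sub h).congr_deriv (by ring)
  refine h2.congr_of_eventuallyEq ?_
  filter_upwards with s
  exact Qfun_eq 0 s

lemma Qfun_cont : Continuous Qfun :=
  continuous_iff_continuousAt.2 fun t => (hasDerivAt_Qfun t).continuousAt

lemma Qfun_zero : Qfun 0 = 1 / 2 := by
  have hsym : (∫ u in Set.Iio (0:ℝ), gpdf u) = ∫ u in Set.Ioi (0:ℝ), gpdf u := by
    rw [← MeasureTheory.integral_Iic_eq_integral_Iio, show (0:ℝ) = -0 by norm_num,
      ← integral_comp_neg_Ioi]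
    simp only [gpdf_even, neg_zero]
  have hsplit : (∫ u in Set.Iio (0:ℝ), gpdf u) + ∫ u in Set.Ici (0:ℝ), gpdf u = 1 := by
    rw [integral_Iio_add_Ici integrable_gpdf.integrableOn
      integrable_gpdf.integrableOn, integral_gpdf]
  rw [MeasureTheory.integral_Ici_eq_integral_Ioi, hsym] at hsplit
  rw [Qfun_def]
  linarith

lemma intervalIntegral_gpdf_pos {a b : ℝ} (hab : a < b) : 0 < ∫ u in a..b, gpdf u :=
  intervalIntegral.intervalIntegral_pos_of_pos
    integrable_gpdf.intervalIntegrable (fun u => gpdf_pos u) hab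

lemma Qfun_strictAnti : StrictAnti Qfun := by
  intro a b hab
  have := intervalIntegral_gpdf_pos hab
  have he := Qfun_eq a b
  linarith

lemma Qfun_pos (t : ℝ) : 0 < Qfun t := by
  have h := Qfun_strictAnti (show t < t + 1 by linarith)
  have := Qfun_nonneg (t + 1)
  linarith

lemma Qfun_lt_one (t : ℝ) : Qfun t < 1 := by
  have hsplit : (∫ u in Set.Iic t, gpdf u) + ∫ u in Set.Ioi t, gpdf u = 1 := by
    rw [integral_Iic_add_Ioi integrable_gpdf.integrableOn
      integrable_gpdf.integrableOn, integral_gpdf]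
  have hpos : 0 < ∫ u in Set.Iic t, gpdf u := by
    have h2 : (∫ u in Set.Ioc (t-1) t, gpdf u) ≤ ∫ u in Set.Iic t, gpdf u := by
      refine MeasureTheory.setIntegral_mono_set integrable_gpdf.integrableOn
        (Filter.Eventually.of_forall fun u => (gpdf_pos u).le) ?_
      exact HasSubset.Subset.eventuallyLE fun u hu => hu.2
    have h3 : 0 < ∫ u in Set.Ioc (t-1) t, gpdf u := by
      rw [← intervalIntegral.integral_of_le (by linarith : t - 1 ≤ t)]
      exact intervalIntegral_gpdf_pos (by linarith)
    linarith
  rw [Qfun_def]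
  linarith

lemma Qfun_le_half {t : ℝ} (ht : 0 ≤ t) : Qfun t ≤ 1 / 2 := by
  rcases eq_or_lt_of_le ht with h | h
  · rw [← h, Qfun_zero]
  · exact le_of_lt (Qfun_zero ▸ Qfun_strictAnti h)

lemma hasDerivAt_gpdf (u : ℝ) : HasDerivAt gpdf (-u * gpdf u) u := by
  have h1 : HasDerivAt (fun v : ℝ => -(v ^ 2) / 2) (-u) u := by
    have := ((hasDerivAt_pow 2 u).neg).div_const 2
    simpa using this.congr_deriv (by ring)
  have h2 := (h1.exp).const_mul (Real.sqrt (2 * Real.pi))⁻¹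
  unfold gpdf
  exact h2.congr_deriv (by ring)

lemma tendsto_gpdf_atTop : Tendsto gpdf atTop (𝓝 0) := by
  have h1 : Tendsto (fun u : ℝ => -(u ^ 2) / 2) atTop atBot := by
    apply Tendsto.atBot_div_const (by norm_num)
    exact tendsto_neg_atBot_iff.2 (tendsto_pow_atTop (by norm_num))
  have h2 := Real.tendsto_exp_atBot.comp h1
  have h3 := h2.const_mul (Real.sqrt (2 * Real.pi))⁻¹
  simp only [mul_zero] at h3
  have hg : gpdf = fun u => (Real.sqrt (2 * Real.pi))⁻¹ * Real.exp (-(u ^ 2) / 2) := rfl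
  rw [hg]
  exact h3

lemma integral_Ioi_mul_gpdf {t : ℝ} (ht : 0 < t) :
    ∫ u in Set.Ioi t, u * gpdf u = gpdf t := by
  have h := MeasureTheory.integral_Ioi_of_hasDerivAt_of_nonneg (g := fun u => -gpdf u)
    (g' := fun u => u * gpdf u) (a := t) (l := 0)
    ((gpdf_cont.neg).continuousWithinAt)
    (fun u _ => by exact (hasDerivAt_gpdf u).neg.congr_deriv (by ring))
    (fun u hu => mul_nonneg (le_trans ht.le (le_of_lt hu)) (gpdf_pos u).le)
    (by simpa using tendsto_gpdf_atTop.neg)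
  simpa using h

lemma integrableOn_mul_gpdf {t : ℝ} (ht : 0 < t) :
    IntegrableOn (fun u => u * gpdf u) (Set.Ioi t) := by
  refine MeasureTheory.integrableOn_Ioi_deriv_of_nonneg (g := fun u => -gpdf u) (l := 0)
    ((gpdf_cont.neg).continuousWithinAt)
    (fun u _ => by exact (hasDerivAt_gpdf u).neg.congr_deriv (by ring))
    (fun u hu => mul_nonneg (le_trans ht.le (le_of_lt hu)) (gpdf_pos u).le)
    ?_
  simpa using tendsto_gpdf_atTop.neg

lemma Qfun_le {t : ℝ} (ht : 0 < t) : Qfun t ≤ gpdf t / t := by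
  have hmono : Qfun t ≤ ∫ u in Set.Ioi t, (1 / t) * (u * gpdf u) := by
    rw [Qfun_def]
    refine MeasureTheory.setIntegral_mono_on integrable_gpdf.integrableOn
      (((integrableOn_mul_gpdf ht).const_mul (1/t))) measurableSet_Ioi ?_
    intro u hu
    have hu' : t < u := hu
    have h1 := gpdf_pos u
    have h6 : gpdf u = 1/t * (t * gpdf u) := by field_simp
    nth_rewrite 1 [h6]
    have h8 : (0:ℝ) ≤ 1/t := by positivity
    gcongr
  rw [MeasureTheory.integral_const_mul, integral_Ioi_mul_gpdf ht] at hmono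
  calc Qfun t ≤ 1 / t * gpdf t := hmono
    _ = gpdf t / t := by ring

lemma tendsto_Qfun_atTop : Tendsto Qfun atTop (𝓝 0) := by
  refine tendsto_of_tendsto_of_tendsto_of_le_of_le' tendsto_const_nhds tendsto_gpdf_atTop
    (Filter.Eventually.of_forall fun t => Qfun_nonneg t) ?_
  filter_upwards [Filter.eventually_ge_atTop (1:ℝ)] with t ht
  have h := Qfun_le (by linarith : (0:ℝ) < t)
  have := gpdf_pos t
  calc Qfun t ≤ gpdf t / t := h
    _ ≤ gpdf t := by rw [div_le_iff₀ (by linarith)]; nlinarith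

lemma hasDerivAt_tail_lb (u : ℝ) :
    HasDerivAt (fun v => v * gpdf v / (1 + v ^ 2)) (gpdf u * (1 - 2*u^2 - u^4) / (1 + u ^ 2)^2) u := by
  have hnum : HasDerivAt (fun v => v * gpdf v) (1 * gpdf u + u * (-u * gpdf u)) u :=
    (hasDerivAt_id u).mul (hasDerivAt_gpdf u)
  have hden : HasDerivAt (fun v : ℝ => 1 + v ^ 2) (2 * u) u := by
    simpa using (hasDerivAt_pow 2 u).const_add 1
  have hden0 : (1 : ℝ) + u ^ 2 ≠ 0 := by positivity
  have := hnum.div hden hden0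
  refine this.congr_deriv ?_
  field_simp
  ring

lemma Qfun_ge {t : ℝ} (ht : 0 ≤ t) : t * gpdf t / (1 + t ^ 2) ≤ Qfun t := by
  set D := fun v => Qfun v - v * gpdf v / (1 + v ^ 2) with hD
  have hderiv : ∀ u, HasDerivAt D (-(gpdf u * (2 / (1 + u^2)^2))) u := by
    intro u
    have := (hasDerivAt_Qfun u).sub (hasDerivAt_tail_lb u)
    refine this.congr_deriv ?_
    have hden0 : (1 : ℝ) + u ^ 2 ≠ 0 := by positivity
    field_simp
    ring
  have hanti : Antitone D := by
    refine antitone_of_deriv_nonpos (fun u => (hderiv u).differentiableAt) ?_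
    intro u
    rw [(hderiv u).deriv]
    have h1 := gpdf_pos u
    have h2 : (0:ℝ) < (1 + u^2)^2 := by positivity
    have : 0 < gpdf u * (2 / (1 + u^2)^2) := by positivity
    linarith
  have htend : Tendsto D atTop (𝓝 0) := by
    have h2 : Tendsto (fun v => v * gpdf v / (1 + v ^ 2)) atTop (𝓝 0) := by
      refine tendsto_of_tendsto_of_tendsto_of_le_of_le' tendsto_const_nhds tendsto_gpdf_atTop
        ?_ ?_
      · filter_upwards [Filter.eventually_ge_atTop (0:ℝ)] with v hv
        have := gpdf_pos v
        positivity
      · filter_upwards [Filter.eventually_ge_atTop (0:ℝ)] with v hv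
        have h1 := gpdf_pos v
        rw [div_le_iff₀ (by positivity)]
        nlinarith [sq_nonneg (v - 1)]
    simpa using tendsto_Qfun_atTop.sub h2
  have hge : 0 ≤ D t := by
    refine le_of_tendsto htend ?_
    filter_upwards [Filter.eventually_ge_atTop t] with s hs
    exact hanti hs
  simp only [hD] at hge
  linarith

lemma exp_neg_ub {s : ℝ} (h0 : 0 ≤ s) (h1 : s ≤ 1) :
    Real.exp (-s) ≤ 1 - s + s ^ 2 / 2 + 2 * s ^ 3 / 9 := by
  have hb := Real.exp_bound (x := -s) (by rwa [abs_neg, abs_of_nonneg h0]) (n := 3) (by norm_num)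
  rw [abs_neg, abs_of_nonneg h0, abs_le] at hb
  simp only [Finset.sum_range_succ, Finset.sum_range_zero] at hb
  norm_num [Nat.factorial] at hb
  ring_nf at hb ⊢
  nlinarith [hb.1, hb.2]

lemma exp_neg_lb {s : ℝ} (h0 : 0 ≤ s) (h1 : s ≤ 1) :
    1 - s + s ^ 2 / 2 - s ^ 3 / 6 - 5 * s ^ 4 / 96 ≤ Real.exp (-s) := by
  have hb := Real.exp_bound (x := -s) (by rwa [abs_neg, abs_of_nonneg h0]) (n := 4) (by norm_num)
  rw [abs_neg, abs_of_nonneg h0, abs_le] at hb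
  simp only [Finset.sum_range_succ, Finset.sum_range_zero] at hb
  norm_num [Nat.factorial] at hb
  ring_nf at hb ⊢
  nlinarith [hb.1, hb.2]

lemma csq : ((Real.sqrt (2 * Real.pi))⁻¹) ^ 2 * (2 * Real.pi) = 1 := by
  rw [inv_pow, Real.sq_sqrt (by positivity : (0:ℝ) ≤ 2 * Real.pi)]
  exact inv_mul_cancel₀ (by positivity)

lemma gpdf_ub_poly {t : ℝ} (h0 : 0 ≤ t) (h1 : t ≤ 1) :
    gpdf t ≤ (Real.sqrt (2 * Real.pi))⁻¹ * (1 - t ^ 2 / 2 + t ^ 4 / 8 + t ^ 6 / 36) := by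
  have hs0 : 0 ≤ t ^ 2 / 2 := by positivity
  have hs1 : t ^ 2 / 2 ≤ 1 := by nlinarith
  have h := exp_neg_ub hs0 hs1
  have hc : (0:ℝ) < (Real.sqrt (2 * Real.pi))⁻¹ := by
    have := sqrt2pi_pos; positivity
  unfold gpdf
  rw [show -(t ^ 2) / 2 = -(t ^ 2 / 2) by ring]
  calc (Real.sqrt (2 * Real.pi))⁻¹ * Real.exp (-(t ^ 2 / 2))
      ≤ (Real.sqrt (2 * Real.pi))⁻¹ * (1 - t^2/2 + (t^2/2)^2/2 + 2*(t^2/2)^3/9) := by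
        exact mul_le_mul_of_nonneg_left h hc.le
    _ = (Real.sqrt (2 * Real.pi))⁻¹ * (1 - t ^ 2 / 2 + t ^ 4 / 8 + t ^ 6 / 36) := by ring

lemma gpdf_lb_poly {t : ℝ} (h0 : 0 ≤ t) (h1 : t ≤ 1) :
    (Real.sqrt (2 * Real.pi))⁻¹ * (1 - t ^ 2 / 2 + t ^ 4 / 8 - t ^ 6 / 48 - 5 * t ^ 8 / 1536)
      ≤ gpdf t := by
  have hs0 : 0 ≤ t ^ 2 / 2 := by positivity
  have hs1 : t ^ 2 / 2 ≤ 1 := by nlinarith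
  have h := exp_neg_lb hs0 hs1
  have hc : (0:ℝ) < (Real.sqrt (2 * Real.pi))⁻¹ := by
    have := sqrt2pi_pos; positivity
  unfold gpdf
  rw [show -(t ^ 2) / 2 = -(t ^ 2 / 2) by ring]
  calc (Real.sqrt (2 * Real.pi))⁻¹ * (1 - t ^ 2 / 2 + t ^ 4 / 8 - t ^ 6 / 48 - 5 * t ^ 8 / 1536)
      = (Real.sqrt (2 * Real.pi))⁻¹ *
        (1 - t^2/2 + (t^2/2)^2/2 - (t^2/2)^3/6 - 5*(t^2/2)^4/96) := by ring
    _ ≤ (Real.sqrt (2 * Real.pi))⁻¹ * Real.exp (-(t ^ 2 / 2)) := mul_le_mul_of_nonneg_left h hc.le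

lemma Qfun_ge_linear {t : ℝ} (ht : 0 ≤ t) :
    1 / 2 - (Real.sqrt (2 * Real.pi))⁻¹ * t ≤ Qfun t := by
  have he := Qfun_eq 0 t
  rw [Qfun_zero] at he
  have hb : (∫ u in (0:ℝ)..t, gpdf u) ≤ ∫ _ in (0:ℝ)..t, (Real.sqrt (2 * Real.pi))⁻¹ := by
    refine intervalIntegral.integral_mono_on ht integrable_gpdf.intervalIntegrable
      intervalIntegrable_const (fun u _ => gpdf_le u)
  rw [intervalIntegral.integral_const, smul_eq_mul, sub_zero] at hb
  have : t * (Real.sqrt (2 * Real.pi))⁻¹ = (Real.sqrt (2 * Real.pi))⁻¹ * t := by ring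
  rw [this] at hb
  linarith

-- small regime numeric core (abstract in q, g)
set_option maxHeartbeats 1000000 in
lemma M_small {t q g c : ℝ} (ht : 0 < t) (hsmall : t ≤ 0.9) (hq : q ≤ 1 / 2)
    (hq0 : 0 < q) (hg0 : 0 < g) (hc : 0 < c) (hc2 : c ^ 2 * (2 * Real.pi) = 1)
    (hpl : 3.141592 < Real.pi)
    (hε1 : 1 / 2 - q ≤ c * t)
    (hgub : g ≤ c * (1 - t ^ 2 / 2 + t ^ 4 / 8 + t ^ 6 / 36)) :
    0 ≤ 2 * t * q * (1 - q) - g * (1 - 2 * q) := by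
  set gp : ℝ := 1 - t ^ 2 / 2 + t ^ 4 / 8 + t ^ 6 / 36 with hgp
  clear_value gp
  have ht2 : t ^ 2 ≤ 0.81 := by
    nlinarith [mul_le_mul hsmall hsmall ht.le (by norm_num : (0:ℝ) ≤ 0.9)]
  have ht4 : t ^ 4 ≤ 0.6561 := by
    nlinarith [mul_le_mul ht2 ht2 (by positivity : (0:ℝ) ≤ t ^ 2) (by norm_num : (0:ℝ) ≤ 0.81)]
  have ht6 : t ^ 6 ≤ 0.531441 := by
    nlinarith [mul_le_mul ht4 ht2 (by positivity : (0:ℝ) ≤ t ^ 2) (by norm_num : (0:ℝ) ≤ 0.6561)]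
  have hgp0 : 0 ≤ gp := by rw [hgp]; nlinarith
  set ε : ℝ := 1 / 2 - q with hε
  clear_value ε
  have hε0 : 0 ≤ ε := by rw [hε]; linarith
  have hεct : ε ≤ c * t := hε1
  have hkey : 2 * c ^ 2 * (t ^ 2 + gp) ≤ 1 / 2 := by
    have hlin : 2 * (t ^ 2 + gp) ≤ Real.pi := by rw [hgp]; nlinarith
    have hcsq : (0:ℝ) < c ^ 2 := by positivity
    nlinarith [mul_le_mul_of_nonneg_left hlin hcsq.le]
  have f1 : 2 * t * ε ^ 2 ≤ 2 * t * (c ^ 2 * t ^ 2) := by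
    have h := mul_le_mul hεct hεct hε0 (mul_nonneg hc.le ht.le)
    nlinarith [h]
  have f2 : g * ε ≤ (c * gp) * (c * t) :=
    mul_le_mul hgub hεct hε0 (by positivity)
  have f3 : t * (2 * c ^ 2 * (t ^ 2 + gp)) ≤ t * (1 / 2) :=
    mul_le_mul_of_nonneg_left hkey ht.le
  have hqe : q = 1 / 2 - ε := by rw [hε]; ring
  rw [hqe]
  nlinarith [f1, f2, f3]

-- large regime numeric core : (t²-1)(1+t²) + 2tg ≥ 0 for 0.9 ≤ t ≤ 1
set_option maxHeartbeats 1000000 in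
lemma M_big {t g c : ℝ} (h09 : 0.9 ≤ t) (h1 : t ≤ 1) (hc : 0 < c)
    (hc2 : c ^ 2 * (2 * Real.pi) = 1) (hpu : Real.pi < 3.141593) (hg0 : 0 < g)
    (hglb : c * (1 - t ^ 2 / 2 + t ^ 4 / 8 - t ^ 6 / 48 - 5 * t ^ 8 / 1536) ≤ g) :
    0 ≤ (t ^ 2 - 1) * (1 + t ^ 2) + 2 * t * g := by
  set gl : ℝ := 1 - t ^ 2 / 2 + t ^ 4 / 8 - t ^ 6 / 48 - 5 * t ^ 8 / 1536 with hgl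
  clear_value gl
  have ht0 : (0:ℝ) < t := by linarith
  have hB : (0.81:ℝ) ≤ t ^ 2 := by nlinarith [mul_le_mul h09 h09 (by norm_num : (0:ℝ) ≤ 0.9) ht0.le]
  have hA : t ^ 2 ≤ 1 := by nlinarith [mul_le_mul h1 h1 ht0.le (by norm_num : (0:ℝ) ≤ 1)]
  have hgl6 : (0.6:ℝ) ≤ gl := by
    rw [hgl]
    nlinarith [sq_nonneg (1 - t ^ 2), sq_nonneg (t ^ 2), sq_nonneg t,
      mul_le_one₀ hA (by positivity : (0:ℝ) ≤ t ^ 2) hA]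
  have hb4 : 0 ≤ 1 - t ^ 4 := by nlinarith
  have h14 : 1 - t ^ 4 ≤ 0.38 := by nlinarith [sq_nonneg (t ^ 2 - 0.81)]
  have hgl2 : (0.36:ℝ) ≤ gl ^ 2 := by nlinarith
  have hsq : (1 - t ^ 4) ^ 2 * (2 * Real.pi) ≤ 4 * t ^ 2 * gl ^ 2 := by
    have l1 : (1 - t ^ 4) ^ 2 ≤ 0.1444 := by nlinarith
    have l2 : (1 - t ^ 4) ^ 2 * (2 * Real.pi) ≤ 0.1444 * (2 * 3.141593) := by
      have hpos : (0:ℝ) < 2 * Real.pi := by nlinarith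
      nlinarith [sq_nonneg (1 - t ^ 4)]
    have l3 : (4 * 0.81) * 0.36 ≤ 4 * t ^ 2 * gl ^ 2 := by
      nlinarith [mul_le_mul hB hgl2 (by norm_num : (0:ℝ) ≤ 0.36) (by positivity : (0:ℝ) ≤ t ^ 2)]
    nlinarith
  -- convert to (1 - t⁴) ≤ 2 t c gl
  have hcgl : 1 - t ^ 4 ≤ 2 * t * (c * gl) := by
    have ha0 : 0 ≤ 2 * t * (c * gl) := by positivity
    have hsq2 : (1 - t ^ 4) ^ 2 ≤ (2 * t * (c * gl)) ^ 2 := by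
      have expand : (2 * t * (c * gl)) ^ 2 = (c ^ 2 * (2 * Real.pi)) * (4 * t ^ 2 * gl ^ 2) / (2 * Real.pi) := by
        field_simp
        ring
      rw [expand, hc2, one_mul, le_div_iff₀ (by positivity)]
      exact hsq
    nlinarith [hsq2, hb4, ha0]
  nlinarith [mul_le_mul_of_nonneg_left hglb (by linarith : (0:ℝ) ≤ 2 * t)]

-- abstract algebraic step for the large regime
lemma M_step {t q g : ℝ} (ht : 0 < t) (hq : q ≤ 1/2) (hg : 0 < g)
    (hle : t * g / (1 + t ^ 2) ≤ q)
    (hcond : 0 ≤ (t ^ 2 - 1) * (1 + t ^ 2) + 2 * t * g) :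
    0 ≤ 2 * t * q * (1 - q) - g * (1 - 2 * q) := by
  have hd : (0:ℝ) < 1 + t ^ 2 := by positivity
  set qb : ℝ := t * g / (1 + t ^ 2) with hqb
  clear_value qb
  have hqb0 : 0 < qb := by rw [hqb]; positivity
  have hqbh : qb ≤ 1 / 2 := le_trans hle hq
  have hexpand : (2 * t * qb * (1 - qb) - g * (1 - 2 * qb)) * (1 + t ^ 2) ^ 2
      = g * ((t ^ 2 - 1) * (1 + t ^ 2) + 2 * t * g) := by
    rw [hqb]
    field_simp
    ring
  have h2 : 0 ≤ 2 * t * qb * (1 - qb) - g * (1 - 2 * qb) := by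
    have hprod := mul_nonneg hg.le hcond
    rw [← hexpand] at hprod
    have hdd : (0:ℝ) < (1 + t ^ 2) ^ 2 := by positivity
    nlinarith [hprod, hdd]
  have h1 : 0 ≤ (q - qb) * (2 * t * (1 - q - qb) + 2 * g) :=
    mul_nonneg (by linarith) (by nlinarith)
  nlinarith [h1, h2]

lemma M_nonneg {t : ℝ} (ht : 0 < t) :
    0 ≤ 2 * t * Qfun t * (1 - Qfun t) - gpdf t * (1 - 2 * Qfun t) := by
  have hc : 0 < (Real.sqrt (2 * Real.pi))⁻¹ := by have := sqrt2pi_pos; positivity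
  have hc2 : ((Real.sqrt (2 * Real.pi))⁻¹) ^ 2 * (2 * Real.pi) = 1 := csq
  have hpl : 3.141592 < Real.pi := Real.pi_gt_d6
  have hpu : Real.pi < 3.141593 := Real.pi_lt_d6
  have hq : Qfun t ≤ 1 / 2 := Qfun_le_half ht.le
  have hq0 : 0 < Qfun t := Qfun_pos t
  have hg0 : 0 < gpdf t := gpdf_pos t
  rcases le_or_gt t 0.9 with hsmall | hbig
  · -- small regime
    have hε1 : 1 / 2 - Qfun t ≤ (Real.sqrt (2 * Real.pi))⁻¹ * t := by
      have := Qfun_ge_linear ht.le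
      linarith
    have hgub := gpdf_ub_poly ht.le (by linarith : t ≤ 1)
    exact M_small ht hsmall hq hq0 hg0 hc hc2 hpl hε1 hgub
  · -- large regime
    refine M_step ht hq hg0 (Qfun_ge ht.le) ?_
    rcases le_or_gt 1 t with h1 | h1
    · have h2 : 1 ≤ t ^ 2 := by nlinarith
      nlinarith [mul_pos ht hg0]
    · have hglb := gpdf_lb_poly ht.le h1.le
      exact M_big hbig.le h1.le hc hc2 hpu hg0 hglb


/-- log-odds ratio of the Gaussian tail. -/
noncomputable def lnR (t : ℝ) : ℝ := Real.log (1 - Qfun t) - Real.log (Qfun t)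

/-- auxiliary function controlling convexity. -/
noncomputable def Lfun (t : ℝ) : ℝ :=
  (1 + t ^ 2) * lnR t - t * gpdf t / (Qfun t * (1 - Qfun t))

lemma Qden_pos (t : ℝ) : 0 < Qfun t * (1 - Qfun t) :=
  mul_pos (Qfun_pos t) (by linarith [Qfun_lt_one t])

lemma lnR_nonneg {t : ℝ} (ht : 0 ≤ t) : 0 ≤ lnR t := by
  have h1 : Qfun t ≤ 1 / 2 := Qfun_le_half ht
  have h2 : 0 < Qfun t := Qfun_pos t
  have : Real.log (Qfun t) ≤ Real.log (1 - Qfun t) :=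
    Real.log_le_log h2 (by linarith)
  unfold lnR; linarith

lemma hasDerivAt_lnR (t : ℝ) :
    HasDerivAt lnR (gpdf t / (Qfun t * (1 - Qfun t))) t := by
  have hQ := hasDerivAt_Qfun t
  have hq0 : Qfun t ≠ 0 := (Qfun_pos t).ne'
  have hq1 : 1 - Qfun t ≠ 0 := by linarith [Qfun_lt_one t]
  have h1 : HasDerivAt (fun s => 1 - Qfun s) (gpdf t) t := by
    exact ((hasDerivAt_const t (1:ℝ)).sub hQ).congr_deriv (by ring)
  have h2 := h1.log hq1
  have h3 := hQ.log hq0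
  have := h2.sub h3
  have heq : gpdf t / (1 - Qfun t) - -gpdf t / Qfun t = gpdf t / (Qfun t * (1 - Qfun t)) := by
    field_simp
    ring
  rw [heq] at this
  exact this

lemma hasDerivAt_Lfun (t : ℝ) :
    HasDerivAt Lfun (2 * t * lnR t +
      t * gpdf t * (2 * t * (Qfun t * (1 - Qfun t)) - gpdf t * (1 - 2 * Qfun t)) /
        (Qfun t * (1 - Qfun t)) ^ 2) t := by
  have hq0 : Qfun t ≠ 0 := (Qfun_pos t).ne'
  have hq1 : (1:ℝ) - Qfun t ≠ 0 := by linarith [Qfun_lt_one t]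
  have hden : Qfun t * (1 - Qfun t) ≠ 0 := mul_ne_zero hq0 hq1
  -- first summand
  have hA : HasDerivAt (fun s => (1 + s ^ 2) * lnR s)
      (2 * t * lnR t + (1 + t ^ 2) * (gpdf t / (Qfun t * (1 - Qfun t)))) t := by
    have h1 : HasDerivAt (fun s : ℝ => 1 + s ^ 2) (2 * t) t := by
      simpa using (hasDerivAt_pow 2 t).const_add 1
    exact h1.mul (hasDerivAt_lnR t)
  -- second summand : t * gpdf t / (Q (1-Q))
  have hnum : HasDerivAt (fun s => s * gpdf s) (gpdf t + t * (-t * gpdf t)) t :=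
    HasDerivAt.mul (hasDerivAt_id t) (hasDerivAt_gpdf t) |>.congr_deriv (by simp only [id_eq]; ring)
  have hdenD : HasDerivAt (fun s => Qfun s * (1 - Qfun s))
      (-gpdf t * (1 - Qfun t) + Qfun t * gpdf t) t := by
    have h1 : HasDerivAt (fun s => 1 - Qfun s) (gpdf t) t := by
      exact ((hasDerivAt_const t (1:ℝ)).sub (hasDerivAt_Qfun t)).congr_deriv (by ring)
    exact (hasDerivAt_Qfun t).mul h1
  have hB := hnum.div hdenD hden
  have hfull := hA.sub hB
  refine hfull.congr_deriv ?_
  field_simp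
  ring

lemma Lfun_zero : Lfun 0 = 0 := by
  unfold Lfun lnR
  rw [Qfun_zero]
  norm_num

lemma Lfun_nonneg {t : ℝ} (ht : 0 ≤ t) : 0 ≤ Lfun t := by
  have hmono : MonotoneOn Lfun (Set.Ici 0) := by
    refine monotoneOn_of_deriv_nonneg (convex_Ici 0)
      (fun s _ => ((hasDerivAt_Lfun s).differentiableAt).continuousAt.continuousWithinAt)
      (fun s hs => ((hasDerivAt_Lfun s).differentiableAt).differentiableWithinAt) ?_
    intro s hs
    rw [interior_Ici] at hs
    have hs0 : 0 < s := hs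
    rw [(hasDerivAt_Lfun s).deriv]
    have h1 : 0 ≤ 2 * s * lnR s := by
      have := lnR_nonneg hs0.le
      positivity
    have h2 : 0 ≤ s * gpdf s * (2 * s * (Qfun s * (1 - Qfun s)) - gpdf s * (1 - 2 * Qfun s)) /
        (Qfun s * (1 - Qfun s)) ^ 2 := by
      have hM := M_nonneg hs0
      have hg := gpdf_pos s
      have hden := Qden_pos s
      have hnum : 0 ≤ s * gpdf s * (2 * s * (Qfun s * (1 - Qfun s)) - gpdf s * (1 - 2 * Qfun s)) := by
        refine mul_nonneg (by positivity) ?_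
        nlinarith [hM]
      positivity
    linarith
  have := hmono (Set.self_mem_Ici) (Set.mem_Ici.2 ht) ht
  rwa [Lfun_zero] at this

/-- the function whose antitonicity gives convexity : `g(t) = φ(t)·lnR(t)/t`. -/
noncomputable def gfun (t : ℝ) : ℝ := gpdf t * lnR t / t

lemma hasDerivAt_gfun {t : ℝ} (ht : t ≠ 0) :
    HasDerivAt gfun (-(gpdf t * Lfun t / t ^ 2)) t := by
  have hnum : HasDerivAt (fun s => gpdf s * lnR s)
      (-t * gpdf t * lnR t + gpdf t * (gpdf t / (Qfun t * (1 - Qfun t)))) t := by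
    exact (hasDerivAt_gpdf t).mul (hasDerivAt_lnR t)
  have h := hnum.div (hasDerivAt_id' t) ht
  refine h.congr_deriv ?_
  have hden : Qfun t * (1 - Qfun t) ≠ 0 := (Qden_pos t).ne'
  unfold Lfun
  field_simp
  ring

lemma gfun_antitoneOn : AntitoneOn gfun (Set.Ioi 0) := by
  refine antitoneOn_of_deriv_nonpos (convex_Ioi 0)
    (fun s hs => ((hasDerivAt_gfun (ne_of_gt hs)).differentiableAt).continuousAt.continuousWithinAt)
    (fun s hs => by
      rw [interior_Ioi] at hs
      exact ((hasDerivAt_gfun (ne_of_gt hs)).differentiableAt).differentiableWithinAt) ?_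
  intro s hs
  rw [interior_Ioi] at hs
  have hs0 : 0 < s := hs
  rw [(hasDerivAt_gfun hs0.ne').deriv]
  have h1 : 0 ≤ gpdf s * Lfun s / s ^ 2 := by
    have := Lfun_nonneg hs0.le
    have := gpdf_pos s
    positivity
  linarith

lemma gfun_nonneg {t : ℝ} (ht : 0 < t) : 0 ≤ gfun t := by
  unfold gfun
  have := gpdf_pos t
  have := lnR_nonneg ht.le
  positivity

/-- the function `x ↦ H_b(Q(√x))`. -/
noncomputable def fent (x : ℝ) : ℝ := binEnt (Qfun (Real.sqrt x))

lemma binEnt_eq (p : ℝ) : binEnt p = Real.binEntropy p / Real.log 2 := by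
  unfold binEnt Real.binEntropy
  rw [Real.log_inv, Real.log_inv, Real.logb, Real.logb]
  ring

lemma continuous_fent : Continuous fent := by
  have h : fent = fun x => Real.binEntropy (Qfun (Real.sqrt x)) / Real.log 2 := by
    funext x
    rw [fent, binEnt_eq]
  rw [h]
  exact ((Real.binEntropy_continuous.comp (Qfun_cont.comp Real.continuous_sqrt))).div_const _

lemma hasDerivAt_fent {x : ℝ} (hx : 0 < x) :
    HasDerivAt fent (-(gfun (Real.sqrt x) / (2 * Real.log 2))) x := by
  have ht : 0 < Real.sqrt x := Real.sqrt_pos.2 hx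
  have hs := Real.hasDerivAt_sqrt hx.ne'
  have hQ := hasDerivAt_Qfun (Real.sqrt x)
  have hp0 : Qfun (Real.sqrt x) ≠ 0 := (Qfun_pos _).ne'
  have hp1 : Qfun (Real.sqrt x) ≠ 1 := (Qfun_lt_one _).ne
  have hB := Real.hasDerivAt_binEntropy hp0 hp1
  have hBQ := hB.comp (Real.sqrt x) hQ
  have hall := hBQ.comp x hs
  have hfeq : fent = fun y => Real.binEntropy (Qfun (Real.sqrt y)) / Real.log 2 := by
    funext y; rw [fent, binEnt_eq]
  rw [hfeq]
  have := hall.div_const (Real.log 2)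
  refine this.congr_deriv ?_
  show (Real.log (1 - Qfun (Real.sqrt x)) - Real.log (Qfun (Real.sqrt x))) * -gpdf (Real.sqrt x) *
      (1 / (2 * Real.sqrt x)) / Real.log 2 = -(gfun (Real.sqrt x) / (2 * Real.log 2))
  unfold gfun lnR
  have hlog2 : Real.log 2 ≠ 0 := (Real.log_pos (by norm_num)).ne'
  field_simp

lemma fent_tangent {c y : ℝ} (hc : 0 < c) (hy : 0 ≤ y) :
    fent c + (-(gfun (Real.sqrt c) / (2 * Real.log 2))) * (y - c) ≤ fent y := by
  set k : ℝ := -(gfun (Real.sqrt c) / (2 * Real.log 2)) with hk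
  have hlog2 : 0 < Real.log 2 := Real.log_pos (by norm_num)
  set ψ : ℝ → ℝ := fun z => fent z - k * z with hψ
  have hψderiv : ∀ z, 0 < z → HasDerivAt ψ (-(gfun (Real.sqrt z) / (2 * Real.log 2)) - k) z := by
    intro z hz
    have h1 := hasDerivAt_fent hz
    have h2 : HasDerivAt (fun w : ℝ => k * w) k z := by
      simpa using (hasDerivAt_id z).const_mul k
    exact h1.sub h2
  have hcont : Continuous ψ := by
    rw [hψ]
    exact continuous_fent.sub (continuous_const.mul continuous_id)
  rcases le_or_gt c y with hcy | hyc
  · -- ψ monotone on [c, ∞)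
    have hmono : MonotoneOn ψ (Set.Ici c) := by
      refine monotoneOn_of_deriv_nonneg (convex_Ici c) hcont.continuousOn
        (fun z hz => by
          rw [interior_Ici] at hz
          exact (hψderiv z (lt_trans hc hz)).differentiableAt.differentiableWithinAt) ?_
      intro z hz
      rw [interior_Ici] at hz
      have hz0 : 0 < z := lt_trans hc hz
      rw [(hψderiv z hz0).deriv]
      have hanti := gfun_antitoneOn (Set.mem_Ioi.2 (Real.sqrt_pos.2 hc))
        (Set.mem_Ioi.2 (Real.sqrt_pos.2 hz0)) (Real.sqrt_le_sqrt (le_of_lt hz))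
      rw [hk]
      have : gfun (Real.sqrt z) / (2 * Real.log 2) ≤ gfun (Real.sqrt c) / (2 * Real.log 2) := by
        gcongr
      linarith
    have := hmono (Set.self_mem_Ici) (Set.mem_Ici.2 hcy) hcy
    simp only [hψ] at this
    linarith
  · -- ψ antitone on [y, c]
    have hanti : AntitoneOn ψ (Set.Icc y c) := by
      refine antitoneOn_of_deriv_nonpos (convex_Icc y c) hcont.continuousOn
        (fun z hz => by
          rw [interior_Icc] at hz
          have hz0 : 0 < z := lt_of_le_of_lt hy hz.1
          exact (hψderiv z hz0).differentiableAt.differentiableWithinAt) ?_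
      intro z hz
      rw [interior_Icc] at hz
      have hz0 : 0 < z := lt_of_le_of_lt hy hz.1
      rw [(hψderiv z hz0).deriv]
      have hanti := gfun_antitoneOn (Set.mem_Ioi.2 (Real.sqrt_pos.2 hz0))
        (Set.mem_Ioi.2 (Real.sqrt_pos.2 hc)) (Real.sqrt_le_sqrt hz.2.le)
      rw [hk]
      have : gfun (Real.sqrt c) / (2 * Real.log 2) ≤ gfun (Real.sqrt z) / (2 * Real.log 2) := by
        gcongr
      linarith
    have := hanti (Set.mem_Icc.2 ⟨le_refl y, hyc.le⟩) (Set.mem_Icc.2 ⟨hyc.le, le_refl c⟩) hyc.le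
    simp only [hψ] at this
    linarith

/-- If `x₁, …, x_m ≥ 0` with `Σ xⱼ ≤ S`, then
`Σⱼ H_b(Q(√(xⱼ))) ≥ m·H_b(Q(√(S/m)))`. -/
theorem sum_binEnt_Qfun_ge (m : ℕ) (hm : 0 < m) (S : ℝ) (hS : 0 ≤ S)
    (x : Fin m → ℝ) (hx : ∀ j, 0 ≤ x j) (hsum : ∑ j, x j ≤ S) :
    (m : ℝ) * binEnt (Qfun (Real.sqrt (S / m))) ≤
      ∑ j, binEnt (Qfun (Real.sqrt (x j))) := by
  have hm' : (0:ℝ) < m := by exact_mod_cast hm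
  rcases eq_or_lt_of_le hS with hS0 | hSpos
  · -- S = 0 : all x j = 0, equality
    have hx0 : ∀ j, x j = 0 := by
      intro j
      have h1 : ∑ j, x j = 0 := le_antisymm (by rw [← hS0] at hsum; exact hsum)
        (Finset.sum_nonneg fun j _ => hx j)
      have := (Finset.sum_eq_zero_iff_of_nonneg (fun j _ => hx j)).1 h1
      exact this j (Finset.mem_univ j)
    have hterm : ∀ j, binEnt (Qfun (Real.sqrt (x j))) = binEnt (Qfun (Real.sqrt (S / m))) := by
      intro j
      rw [hx0 j, ← hS0]
      norm_num
    rw [Finset.sum_congr rfl (fun j _ => hterm j), Finset.sum_const, Finset.card_univ,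
      Fintype.card_fin, nsmul_eq_mul]
  · -- S > 0
    set c : ℝ := S / m with hcdef
    have hc : 0 < c := by positivity
    set k : ℝ := -(gfun (Real.sqrt c) / (2 * Real.log 2)) with hkdef
    have hk0 : k ≤ 0 := by
      rw [hkdef]
      have h1 := gfun_nonneg (Real.sqrt_pos.2 hc)
      have h2 : 0 < Real.log 2 := Real.log_pos (by norm_num)
      have : 0 ≤ gfun (Real.sqrt c) / (2 * Real.log 2) := by positivity
      linarith
    have key : ∀ j, fent c + k * (x j - c) ≤ fent (x j) := fun j => fent_tangent hc (hx j)
    have h1 : ∑ j, (fent c + k * (x j - c)) ≤ ∑ j, fent (x j) :=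
      Finset.sum_le_sum fun j _ => key j
    have hmc : (m:ℝ) * c = S := by
      rw [hcdef]
      field_simp
    have h2 : ∑ j, (fent c + k * (x j - c)) = m * fent c + k * ((∑ j, x j) - S) := by
      rw [Finset.sum_add_distrib, Finset.sum_const, Finset.card_univ, Fintype.card_fin,
        nsmul_eq_mul, ← Finset.mul_sum, Finset.sum_sub_distrib, Finset.sum_const,
        Finset.card_univ, Fintype.card_fin, nsmul_eq_mul, hmc]
    have h3 : 0 ≤ k * ((∑ j, x j) - S) := by
      have hns : (∑ j, x j) - S ≤ 0 := by linarith
      nlinarith [mul_nonneg (neg_nonneg.2 hk0) (neg_nonneg.2 hns)]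
    have hfinal : (m:ℝ) * fent c ≤ ∑ j, fent (x j) := by linarith [h1, h2.symm ▸ h1]
    convert hfinal using 2 <;> rfl
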